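/- arXiv:1809.07641 — 2 statements merged into one kernel-verified Lean document; each statement's English description precedes it below -/
import Mathlib

section
/- Let Z and Zⁱ (i = 1, 2, …) be complete metric spaces with Z nonempty, φⁱ : Z → Zⁱ isometric embeddings, and let d be the pseudodistance on ⊔_{i=1}^∞ Zⁱ equal to d_{Zⁱ} on each piece and given by d(z, z') = inf_{z̄ ∈ Z} (d_{Zⁱ}(z, φⁱ(z̄)) + d_{Zʲ}(φʲ(z̄), z')) for z ∈ Zⁱ, z' ∈ Zʲ, i ≠ j. Then the quotient metric space (⊔_{i=1}^∞ Zⁱ)/Z := (⊔_{i=1}^∞ Zⁱ)/∼, where z ∼ z' iff d(z, z') = 0, is a complete metric space. -/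
set_option linter.unusedSectionVars false
set_option maxHeartbeats 1000000

/-- Glued pseudodistance on the countable disjoint union `Σ i, W i` of metric spaces,
obtained from isometric embeddings `φ i : Z → W i` of a common metric space `Z`. -/
noncomputable def glueDistSigma {Z : Type*} [MetricSpace Z] {W : ℕ → Type*}
    [∀ i, MetricSpace (W i)] (φ : ∀ i, Z → W i) : (Σ i, W i) → (Σ i, W i) → ℝ
  | ⟨i, z⟩, ⟨j, z'⟩ =>
    if h : i = j then dist (h ▸ z) z'
    else ⨅ x : Z, (dist z (φ i x) + dist (φ j x) z')

universe u v

section Aux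
variable {Z : Type u} [MetricSpace Z] [Nonempty Z] {W : ℕ → Type v} [∀ i, MetricSpace (W i)]
  (φ : ∀ i, Z → W i)

local notation "gds" => glueDistSigma φ

lemma gds_same (i : ℕ) (z z' : W i) : gds ⟨i, z⟩ ⟨i, z'⟩ = dist z z' := by
  simp [glueDistSigma]

lemma gds_ne {i j : ℕ} (h : i ≠ j) (z : W i) (z' : W j) :
    gds ⟨i, z⟩ ⟨j, z'⟩ = ⨅ x : Z, (dist z (φ i x) + dist (φ j x) z') := by
  simp [glueDistSigma, h]

lemma gds_bdd {i j : ℕ} (z : W i) (z' : W j) :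
    BddBelow (Set.range fun x : Z => dist z (φ i x) + dist (φ j x) z') :=
  ⟨0, by rintro _ ⟨x, rfl⟩; positivity⟩

lemma gds_le {i j : ℕ} (h : i ≠ j) (z : W i) (z' : W j) (x : Z) :
    gds ⟨i, z⟩ ⟨j, z'⟩ ≤ dist z (φ i x) + dist (φ j x) z' := by
  rw [gds_ne φ h]
  exact ciInf_le (gds_bdd φ z z') x

lemma gds_nonneg (a b : Σ i, W i) : 0 ≤ gds a b := by
  obtain ⟨i, z⟩ := a; obtain ⟨j, z'⟩ := b
  rcases eq_or_ne i j with rfl | h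
  · rw [gds_same]; exact dist_nonneg
  · rw [gds_ne φ h]
    exact le_ciInf fun x => by positivity

lemma gds_self (a : Σ i, W i) : gds a a = 0 := by
  obtain ⟨i, z⟩ := a; rw [gds_same]; exact dist_self z

lemma gds_comm (a b : Σ i, W i) : gds a b = gds b a := by
  obtain ⟨i, z⟩ := a; obtain ⟨j, z'⟩ := b
  rcases eq_or_ne i j with rfl | h
  · rw [gds_same, gds_same, dist_comm]
  · rw [gds_ne φ h, gds_ne φ h.symm]
    exact iInf_congr fun x => by rw [dist_comm z, dist_comm z']; ring

lemma gds_cast {i : ℕ} (a : Σ j, W j) (h : a.1 = i) (b : W i) :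
    gds a ⟨i, b⟩ = dist (h ▸ a.2) b := by
  obtain ⟨j, w⟩ := a
  cases h
  rw [gds_same]

lemma gds_cast2 {i : ℕ} (a b : Σ j, W j) (ha : a.1 = i) (hb : b.1 = i) :
    gds a b = dist (ha ▸ a.2) (hb ▸ b.2) := by
  obtain ⟨j, w⟩ := a; obtain ⟨k, w'⟩ := b
  cases ha; cases hb
  rw [gds_same]

variable (hφ : ∀ i, ∀ x y : Z, dist (φ i x) (φ i y) = dist x y)
include hφ

lemma gds_triangle (a b c : Σ i, W i) : gds a c ≤ gds a b + gds b c := by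
  obtain ⟨i, z⟩ := a; obtain ⟨j, w⟩ := b; obtain ⟨k, u⟩ := c
  rcases eq_or_ne i j with rfl | hij
  · rcases eq_or_ne i k with rfl | hik
    · rw [gds_same, gds_same, gds_same]; exact dist_triangle _ _ _
    · rw [gds_same, gds_ne φ hik, gds_ne φ hik]
      have : ∀ x : Z, (⨅ x : Z, (dist z (φ i x) + dist (φ k x) u)) - dist z w ≤
          dist w (φ i x) + dist (φ k x) u := fun x => by
        have h1 := ciInf_le (gds_bdd φ z u) x
        have : dist z (φ i x) ≤ dist z w + dist w (φ i x) := dist_triangle _ _ _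
        linarith
      linarith [le_ciInf this]
  · rcases eq_or_ne j k with rfl | hjk
    · rw [gds_same, gds_ne φ hij, gds_ne φ hij]
      have : ∀ x : Z, (⨅ x : Z, (dist z (φ i x) + dist (φ j x) u)) - dist w u ≤
          dist z (φ i x) + dist (φ j x) w := fun x => by
        have h1 := ciInf_le (gds_bdd φ z u) x
        have : dist (φ j x) u ≤ dist (φ j x) w + dist w u := dist_triangle _ _ _
        linarith
      linarith [le_ciInf this]
    · rcases eq_or_ne i k with rfl | hik
      · rw [gds_same, gds_ne φ hij, gds_ne φ hjk]
        refine le_ciInf_add_ciInf fun x y => ?_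
        have h1 : dist z u ≤ dist z (φ i x) + dist x y + dist (φ i y) u := by
          rw [← hφ i x y]
          linarith [dist_triangle z (φ i x) u, dist_triangle (φ i x) (φ i y) u,
            dist_triangle z (φ i y) u, dist_triangle z (φ i x) (φ i y)]
        have h2 : dist x y ≤ dist (φ j x) w + dist w (φ j y) := by
          rw [← hφ j x y]; exact dist_triangle _ _ _
        linarith
      · rw [gds_ne φ hik, gds_ne φ hij, gds_ne φ hjk]
        refine le_ciInf_add_ciInf fun x y => ?_
        refine le_trans (ciInf_le (gds_bdd φ z u) y) ?_
        have h1 : dist z (φ i y) ≤ dist z (φ i x) + dist x y :=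
          (dist_triangle _ _ _).trans (by rw [hφ i x y])
        have h2 : dist x y ≤ dist (φ j x) w + dist w (φ j y) := by
          rw [← hφ j x y]; exact dist_triangle _ _ _
        linarith

lemma gds_phi (i j : ℕ) (x y : Z) : gds ⟨i, φ i x⟩ ⟨j, φ j y⟩ = dist x y := by
  rcases eq_or_ne i j with rfl | h
  · rw [gds_same, hφ]
  · rw [gds_ne φ h]
    apply le_antisymm
    · refine (ciInf_le (gds_bdd φ _ _) y).trans ?_
      rw [hφ, hφ, dist_self]; linarith [dist_nonneg (x := x) (y := y)]
    · refine le_ciInf fun t => ?_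
      rw [hφ, hφ]
      exact dist_triangle _ _ _

/-- The glued pseudodistance on the sigma type is complete. -/
lemma gds_complete [CompleteSpace Z] [∀ i, CompleteSpace (W i)] :
    @CompleteSpace (Σ i, W i)
      (PseudoMetricSpace.toUniformSpace (self :=
        { dist := gds
          dist_self := gds_self φ
          dist_comm := gds_comm φ
          dist_triangle := gds_triangle φ hφ })) := by
  letI P : PseudoMetricSpace (Σ i, W i) :=
    { dist := gds
      dist_self := gds_self φ
      dist_comm := gds_comm φ
      dist_triangle := gds_triangle φ hφ }
  have hdist : ∀ a b : Σ i, W i, dist a b = gds a b := fun _ _ => rfl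
  apply Metric.complete_of_cauchySeq_tendsto
  intro u hu
  by_cases hA : ∃ i, ∃ᶠ n in Filter.atTop, (u n).1 = i
  · -- Case A : one fiber is visited infinitely often
    obtain ⟨i, hfreq⟩ := hA
    obtain ⟨ψ, hψmono, hψ⟩ := Filter.extraction_of_frequently_atTop hfreq
    set v : ℕ → W i := fun n => (hψ n) ▸ (u (ψ n)).2 with hv
    have hdv : ∀ n m, dist (v n) (v m) = dist (u (ψ n)) (u (ψ m)) := fun n m => by
      rw [hdist, gds_cast2 φ _ _ (hψ n) (hψ m)]
    have hc : CauchySeq (u ∘ ψ) := hu.comp_tendsto hψmono.tendsto_atTop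
    have hcv : CauchySeq v := by
      rw [Metric.cauchySeq_iff] at hc ⊢
      intro ε hε
      obtain ⟨N, hN⟩ := hc ε hε
      exact ⟨N, fun m hm n hn => by rw [hdv]; exact hN m hm n hn⟩
    obtain ⟨l, hl⟩ := cauchySeq_tendsto_of_complete hcv
    have hsub : Filter.Tendsto (u ∘ ψ) Filter.atTop
        (@nhds _ UniformSpace.toTopologicalSpace (⟨i, l⟩ : Σ i, W i)) := by
      rw [Metric.tendsto_atTop] at hl ⊢
      intro ε hε
      obtain ⟨N, hN⟩ := hl ε hε
      refine ⟨N, fun n hn => ?_⟩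
      have : dist ((u ∘ ψ) n) (⟨i, l⟩ : Σ i, W i) = dist (v n) l := by
        rw [hdist]
        exact gds_cast φ _ (hψ n) l
      rw [this]; exact hN n hn
    exact ⟨⟨i, l⟩, tendsto_nhds_of_cauchySeq_of_subseq hu hψmono.tendsto_atTop hsub⟩
  · -- Case B : every fiber is visited finitely often
    push_neg at hA
    -- distance of u n to the glued copy of Z
    set R : ℕ → ℝ := fun n => ⨅ x : Z, dist (u n).2 (φ (u n).1 x) with hR
    have hRnonneg : ∀ n, 0 ≤ R n := fun n => le_ciInf fun x => dist_nonneg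
    have hRbdd : ∀ n, BddBelow (Set.range fun x : Z => dist (u n).2 (φ (u n).1 x)) :=
      fun n => ⟨0, by rintro _ ⟨x, rfl⟩; positivity⟩
    have hR0 : ∀ ε > 0, ∃ N, ∀ n ≥ N, R n < ε := by
      intro ε hε
      obtain ⟨N, hN⟩ := Metric.cauchySeq_iff.1 hu ε hε
      refine ⟨N, fun n hn => ?_⟩
      obtain ⟨m, hm1, hm2⟩ := ((hA (u n).1).and (Filter.eventually_ge_atTop N)).exists
      have hne : (u n).1 ≠ (u m).1 := fun h => hm1 h.symm
      have hlt : gds (u n) (u m) < ε := by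
        rw [← hdist]; exact hN n hn m hm2
      rw [gds_ne φ hne] at hlt
      obtain ⟨x, hx⟩ := exists_lt_of_ciInf_lt hlt
      calc R n ≤ dist (u n).2 (φ (u n).1 x) := ciInf_le (hRbdd n) x
        _ < ε := by have := dist_nonneg (x := φ (u m).1 x) (y := (u m).2); linarith
    -- choose approximating points in Z
    have hex : ∀ n : ℕ, ∃ x : Z, dist (u n).2 (φ (u n).1 x) < R n + 1 / (n + 1) := by
      intro n
      apply exists_lt_of_ciInf_lt
      have h0 : (0 : ℝ) < 1 / (n + 1) := by positivity
      exact lt_add_of_pos_right (R n) h0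
    choose xs hxs using hex
    have hten : ∀ ε > 0, ∃ N, ∀ n ≥ N, dist (u n).2 (φ (u n).1 (xs n)) < ε := by
      intro ε hε
      obtain ⟨N1, hN1⟩ := hR0 (ε / 2) (by linarith)
      obtain ⟨N2, hN2⟩ := exists_nat_gt (2 / ε)
      refine ⟨max N1 N2, fun n hn => ?_⟩
      have h1 := hN1 n (le_trans (le_max_left _ _) hn)
      have h2 : (1 : ℝ) / (n + 1) < ε / 2 := by
        rw [div_lt_iff₀ (by positivity)]
        have : (2 : ℝ) / ε < n + 1 := by
          have : (N2 : ℝ) ≤ n := Nat.cast_le.2 (le_trans (le_max_right _ _) hn)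
          linarith
        rw [div_lt_iff₀ hε] at this
        linarith
      linarith [hxs n]
    -- the points xs form a Cauchy sequence in Z
    have hkey : ∀ n m, dist (xs n) (xs m) ≤
        dist (u n).2 (φ (u n).1 (xs n)) + dist (u n) (u m) + dist (u m).2 (φ (u m).1 (xs m)) := by
      intro n m
      have e1 : gds ⟨(u n).1, φ (u n).1 (xs n)⟩ ⟨(u m).1, φ (u m).1 (xs m)⟩
          = dist (xs n) (xs m) := gds_phi φ hφ _ _ _ _
      have t1 := gds_triangle φ hφ (⟨(u n).1, φ (u n).1 (xs n)⟩ : Σ i, W i) (u n)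
        (⟨(u m).1, φ (u m).1 (xs m)⟩ : Σ i, W i)
      have t2 := gds_triangle φ hφ (u n) (u m) (⟨(u m).1, φ (u m).1 (xs m)⟩ : Σ i, W i)
      have e2 : gds (⟨(u n).1, φ (u n).1 (xs n)⟩ : Σ i, W i) (u n)
          = dist (u n).2 (φ (u n).1 (xs n)) := by
        rw [gds_comm]
        exact (gds_same φ _ _ _).trans rfl
      have e3 : gds (u m) (⟨(u m).1, φ (u m).1 (xs m)⟩ : Σ i, W i)
          = dist (u m).2 (φ (u m).1 (xs m)) := gds_same φ _ _ _
      rw [e1, e2] at t1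
      rw [e3] at t2
      rw [hdist]
      linarith
    have hxc : CauchySeq xs := by
      rw [Metric.cauchySeq_iff]
      intro ε hε
      obtain ⟨N1, hN1⟩ := hten (ε / 3) (by linarith)
      obtain ⟨N2, hN2⟩ := Metric.cauchySeq_iff.1 hu (ε / 3) (by linarith)
      refine ⟨max N1 N2, fun m hm n hn => ?_⟩
      have := hkey m n
      have h1 := hN1 m (le_trans (le_max_left _ _) hm)
      have h2 := hN1 n (le_trans (le_max_left _ _) hn)
      have h3 := hN2 m (le_trans (le_max_right _ _) hm) n (le_trans (le_max_right _ _) hn)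
      linarith
    obtain ⟨xl, hxl⟩ := cauchySeq_tendsto_of_complete hxc
    refine ⟨⟨0, φ 0 xl⟩, ?_⟩
    rw [Metric.tendsto_atTop] at hxl ⊢
    intro ε hε
    obtain ⟨N1, hN1⟩ := hten (ε / 2) (by linarith)
    obtain ⟨N2, hN2⟩ := hxl (ε / 2) (by linarith)
    refine ⟨max N1 N2, fun n hn => ?_⟩
    have t1 := gds_triangle φ hφ (u n) (⟨(u n).1, φ (u n).1 (xs n)⟩ : Σ i, W i)
      (⟨0, φ 0 xl⟩ : Σ i, W i)
    have e1 : gds (u n) (⟨(u n).1, φ (u n).1 (xs n)⟩ : Σ i, W i)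
        = dist (u n).2 (φ (u n).1 (xs n)) := gds_same φ _ _ _
    have e2 : gds (⟨(u n).1, φ (u n).1 (xs n)⟩ : Σ i, W i) (⟨0, φ 0 xl⟩ : Σ i, W i)
        = dist (xs n) xl := gds_phi φ hφ _ _ _ _
    have h1 := hN1 n (le_trans (le_max_left _ _) hn)
    have h2 := hN2 n (le_trans (le_max_right _ _) hn)
    rw [hdist]
    rw [e1, e2] at t1
    linarith
end Aux


/-- Type synonym for `Σ i, W i`, used to install the glued pseudometric without
clashing with pre-existing instances on sigma types. -/
def GluedSigma (W : ℕ → Type v) : Type v := Σ i, W i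

/-- The quotient metric space `(⊔ᵢ Zⁱ)/Z` of the glued
pseudodistance (the quotient of `Σ i, W i` by the relation `d(z, z') = 0`, with
the distance induced by the glued pseudodistance) is a complete metric space. -/
theorem glueSigma_quotient_complete {Z : Type u} [MetricSpace Z]
    [CompleteSpace Z] [Nonempty Z] {W : ℕ → Type v} [∀ i, MetricSpace (W i)]
    [∀ i, CompleteSpace (W i)] (φ : ∀ i, Z → W i)
    (hφ : ∀ i, ∀ x y : Z, dist (φ i x) (φ i y) = dist x y) :
    ∃ (Q : Type v) (_ : MetricSpace Q) (π : (Σ i, W i) → Q),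
      Function.Surjective π ∧
      (∀ a b : Σ i, W i, dist (π a) (π b) = glueDistSigma φ a b) ∧
      (∀ a b : Σ i, W i, π a = π b ↔ glueDistSigma φ a b = 0) ∧
      CompleteSpace Q := by
  letI P : PseudoMetricSpace (GluedSigma W) :=
    { dist := fun a b => glueDistSigma φ a b
      dist_self := gds_self φ
      dist_comm := gds_comm φ
      dist_triangle := gds_triangle φ hφ }
  haveI : CompleteSpace (GluedSigma W) := gds_complete φ hφ
  refine ⟨SeparationQuotient (GluedSigma W), inferInstance,
    (fun a => SeparationQuotient.mk (show GluedSigma W from a)), ?_, ?_, ?_, inferInstance⟩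
  · intro q
    obtain ⟨a, rfl⟩ := SeparationQuotient.surjective_mk q
    exact ⟨a, rfl⟩
  · exact fun a b => SeparationQuotient.dist_mk _ _
  · intro a b
    rw [SeparationQuotient.mk_eq_mk, Metric.inseparable_iff]
    exact Iff.rfl
end

section
/- Let Z and Zⁱ (i = 1, 2, …) be complete metric spaces with Z nonempty, φⁱ : Z → Zⁱ isometric embeddings, and let d be the pseudodistance on ⊔_{i=1}^∞ Zⁱ equal to d_{Zⁱ} on each piece and given by d(z, z') = inf_{z̄ ∈ Z} (d_{Zⁱ}(z, φⁱ(z̄)) + d_{Zʲ}(φʲ(z̄), z')) for z ∈ Zⁱ, z' ∈ Zʲ, i ≠ j. Let {z_n} be a sequence with z_n ∈ Z^{i(n)} for a strictly increasing sequence of indices i(n), which is Cauchy for d. Then: (1) d_{Z^{i(n)}}(z_n, φ^{i(n)}(Z)) → 0 as n → ∞; (2) if z̄_n ∈ Z are chosen so that d_{Z^{i(n)}}(z_n, φ^{i(n)}(z̄_n)) < d_{Z^{i(n)}}(z_n, φ^{i(n)}(Z)) + 2^{-n}, then {z̄_n} is a Cauchy sequence in Z, and writing z̄ = lim z̄_n,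 one has d(φ^{i(n)}(z̄), z_n) → 0 as n → ∞. -/
open Filter

/-- Let `z n ∈ W (i n)` (with `i` strictly increasing) be a Cauchy
sequence for the glued pseudodistance `d`.  Then:
(1) `d_{W (i n)}(z n, φ^{i n}(Z)) → 0`;
(2) if `z̄ n ∈ Z` are chosen so that
`dist (z n) (φ (i n) (z̄ n)) < d(z n, φ^{i n}(Z)) + 2⁻ⁿ`, then `z̄` is a Cauchy
sequence in `Z`, and if `z̄ n → z̄`, then `d(φ^{i n}(z̄), z n) → 0`. -/
theorem glueSigma_cauchy_across_pieces {Z : Type*} [MetricSpace Z]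
    [CompleteSpace Z] [Nonempty Z] {W : ℕ → Type*} [∀ i, MetricSpace (W i)]
    [∀ i, CompleteSpace (W i)] (φ : ∀ i, Z → W i)
    (hφ : ∀ i, ∀ x y : Z, dist (φ i x) (φ i y) = dist x y)
    (i : ℕ → ℕ) (hi : StrictMono i) (z : ∀ n : ℕ, W (i n))
    (hcauchy : ∀ ε > (0 : ℝ), ∃ N : ℕ, ∀ m n : ℕ, N ≤ m → N ≤ n →
      glueDistSigma φ ⟨i m, z m⟩ ⟨i n, z n⟩ < ε) :
    Tendsto (fun n => Metric.infDist (z n) (Set.range (φ (i n)))) atTop (nhds 0) ∧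
    ∀ zbar : ℕ → Z,
      (∀ n, dist (z n) (φ (i n) (zbar n)) <
        Metric.infDist (z n) (Set.range (φ (i n))) + (2 : ℝ)⁻¹ ^ n) →
      CauchySeq zbar ∧
      ∀ zlim : Z, Tendsto zbar atTop (nhds zlim) →
        Tendsto (fun n => glueDistSigma φ ⟨i n, φ (i n) zlim⟩ ⟨i n, z n⟩)
          atTop (nhds 0) := by
  have hglue_ne : ∀ (m n : ℕ), i m ≠ i n →
      glueDistSigma φ ⟨i m, z m⟩ ⟨i n, z n⟩ =
        ⨅ x : Z, (dist (z m) (φ (i m) x) + dist (φ (i n) x) (z n)) := by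
    intro m n h
    simp [glueDistSigma, h]
  have hinf0 : ∀ n, 0 ≤ Metric.infDist (z n) (Set.range (φ (i n))) :=
    fun n => Metric.infDist_nonneg
  have hA : ∀ m n : ℕ, i m ≠ i n →
      Metric.infDist (z m) (Set.range (φ (i m))) ≤
        glueDistSigma φ ⟨i m, z m⟩ ⟨i n, z n⟩ := by
    intro m n h
    rw [hglue_ne m n h]
    refine le_ciInf fun x => ?_
    calc Metric.infDist (z m) (Set.range (φ (i m))) ≤ dist (z m) (φ (i m) x) :=
          Metric.infDist_le_dist_of_mem ⟨x, rfl⟩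
      _ ≤ _ := le_add_of_nonneg_right dist_nonneg
  have hne_succ : ∀ n : ℕ, i n ≠ i (n + 1) := fun n => (hi (Nat.lt_succ_self n)).ne
  have h1 : Tendsto (fun n => Metric.infDist (z n) (Set.range (φ (i n)))) atTop (nhds 0) := by
    rw [Metric.tendsto_atTop]
    intro ε hε
    obtain ⟨N, hN⟩ := hcauchy ε hε
    refine ⟨N, fun n hn => ?_⟩
    rw [Real.dist_eq, sub_zero, abs_of_nonneg (hinf0 n)]
    exact lt_of_le_of_lt (hA n (n + 1) (hne_succ n))
      (hN n (n + 1) hn (hn.trans (Nat.le_succ n)))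
  refine ⟨h1, fun zbar hzbar => ?_⟩
  -- key triangle-type inequality across pieces
  have key : ∀ m n : ℕ, i m ≠ i n →
      dist (zbar m) (zbar n) ≤ dist (z m) (φ (i m) (zbar m)) +
        glueDistSigma φ ⟨i m, z m⟩ ⟨i n, z n⟩ + dist (z n) (φ (i n) (zbar n)) := by
    intro m n hij
    rw [hglue_ne m n hij]
    have h : dist (zbar m) (zbar n) - dist (z m) (φ (i m) (zbar m))
              - dist (z n) (φ (i n) (zbar n)) ≤
        ⨅ x : Z, (dist (z m) (φ (i m) x) + dist (φ (i n) x) (z n)) := le_ciInf ?_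
    · linarith
    · intro x
      have t1 : dist (zbar m) (zbar n) ≤ dist (zbar m) x + dist x (zbar n) :=
        dist_triangle _ _ _
      rw [← hφ (i m) (zbar m) x, ← hφ (i n) x (zbar n)] at t1
      have t2 : dist (φ (i m) (zbar m)) (φ (i m) x) ≤
          dist (φ (i m) (zbar m)) (z m) + dist (z m) (φ (i m) x) := dist_triangle _ _ _
      have t3 : dist (φ (i n) x) (φ (i n) (zbar n)) ≤
          dist (φ (i n) x) (z n) + dist (z n) (φ (i n) (zbar n)) := dist_triangle _ _ _
      have c1 : dist (φ (i m) (zbar m)) (z m) = dist (z m) (φ (i m) (zbar m)) := dist_comm _ _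
      linarith
  have hcs : CauchySeq zbar := by
    rw [Metric.cauchySeq_iff]
    intro ε hε
    obtain ⟨N1, hN1⟩ := hcauchy (ε / 5) (by linarith)
    obtain ⟨N2, hN2⟩ := exists_pow_lt_of_lt_one (show (0:ℝ) < ε / 5 by linarith)
      (show ((2:ℝ)⁻¹) < 1 by norm_num)
    refine ⟨max N1 N2, fun m hm n hn => ?_⟩
    rcases eq_or_ne m n with rfl | hmn
    · simpa using hε
    have hij : i m ≠ i n := fun h => hmn (hi.injective h)
    have hglue1 := hN1 m n (le_of_max_le_left hm) (le_of_max_le_left hn)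
    have hglue2 := hN1 n m (le_of_max_le_left hn) (le_of_max_le_left hm)
    have hinfm := le_trans (hA m n hij) hglue1.le
    have hinfn := le_trans (hA n m hij.symm) hglue2.le
    have hpm : ((2:ℝ)⁻¹) ^ m ≤ ((2:ℝ)⁻¹) ^ N2 :=
      pow_le_pow_of_le_one (by norm_num) (by norm_num) (le_of_max_le_right hm)
    have hpn : ((2:ℝ)⁻¹) ^ n ≤ ((2:ℝ)⁻¹) ^ N2 :=
      pow_le_pow_of_le_one (by norm_num) (by norm_num) (le_of_max_le_right hn)
    have hm' := hzbar m
    have hn' := hzbar n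
    have := key m n hij
    linarith
  refine ⟨hcs, fun zlim hzlim => ?_⟩
  have heq : ∀ n, glueDistSigma φ ⟨i n, φ (i n) zlim⟩ ⟨i n, z n⟩ =
      dist (φ (i n) zlim) (z n) := fun n => by simp [glueDistSigma]
  have hb : ∀ n, dist (φ (i n) zlim) (z n) ≤
      dist (zbar n) zlim +
        (Metric.infDist (z n) (Set.range (φ (i n))) + (2:ℝ)⁻¹ ^ n) := by
    intro n
    have t1 : dist (φ (i n) zlim) (z n) ≤
        dist (φ (i n) zlim) (φ (i n) (zbar n)) + dist (φ (i n) (zbar n)) (z n) :=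
      dist_triangle _ _ _
    rw [hφ, dist_comm (φ (i n) (zbar n)) (z n)] at t1
    have := (hzbar n).le
    have c : dist zlim (zbar n) = dist (zbar n) zlim := dist_comm _ _
    linarith
  have hd0 : Tendsto (fun n => dist (zbar n) zlim) atTop (nhds 0) := by
    simpa using hzlim.dist (tendsto_const_nhds (x := zlim))
  have hp0 : Tendsto (fun n : ℕ => ((2:ℝ)⁻¹) ^ n) atTop (nhds 0) :=
    tendsto_pow_atTop_nhds_zero_of_lt_one (by norm_num) (by norm_num)
  have hsum : Tendsto
      (fun n => dist (zbar n) zlim +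
        (Metric.infDist (z n) (Set.range (φ (i n))) + (2:ℝ)⁻¹ ^ n)) atTop (nhds 0) := by
    have := hd0.add (h1.add hp0)
    simpa using this
  refine squeeze_zero (fun n => ?_) (fun n => ?_) hsum
  · rw [heq]; exact dist_nonneg
  · rw [heq]; exact hb n
end
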